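/- For a > 1, B > 1 and x > (B/(B-1)) * (a-1), the upper incomplete gamma function satisfies Γ(a, x) ≤ B * x^(a-1) * e^(-x). -/

import Mathlib

open Set MeasureTheory Real Filter

theorem stmt_9 (a B x : ℝ) (ha : 1 < a) (hB : 1 < B) (hx : B / (B - 1) * (a - 1) < x) :
    (∫ u in Set.Ioi x, u ^ (a - 1) * Real.exp (-u)) ≤ B * x ^ (a - 1) * Real.exp (-x) := by
  have hB1 : (0:ℝ) < B - 1 := by linarith
  have ha1 : (0:ℝ) < a - 1 := by linarith
  have hB0 : (0:ℝ) < B := by linarith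
  have hx0 : 0 < x := lt_trans (by positivity) hx
  set c : ℝ := 1 - (a - 1) / x with hc_def
  have hxx : B * (a - 1) < (B - 1) * x := by
    have h := hx
    rw [div_mul_eq_mul_div, div_lt_iff₀ hB1] at h
    nlinarith
  have hkey : (a - 1) / x < (B - 1) / B := by
    rw [div_lt_div_iff₀ hx0 hB0]
    nlinarith
  have hc : 0 < c := by
    have h1 : (B - 1) / B < 1 := by
      rw [div_lt_one hB0]; linarith
    simp only [hc_def]; linarith [hkey]
  have hcB : 1 / c < B := by
    rw [div_lt_iff₀ hc]
    have h1 : 1 - (B - 1) / B < c := by simp only [hc_def]; linarith [hkey]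
    have h3 : B * (1 - (B - 1) / B) = 1 := by field_simp; ring
    have h4 := mul_lt_mul_of_pos_left h1 hB0
    rw [h3] at h4
    exact h4
  -- pointwise bound
  have hpt : ∀ u ∈ Ioi x, u ^ (a - 1) * Real.exp (-u)
      ≤ x ^ (a - 1) * Real.exp (-x) * Real.exp (-c * (u - x)) := by
    intro u hu
    have hux : x < u := hu
    have hu0 : 0 < u := lt_trans hx0 hux
    have hlog : Real.log (u / x) ≤ u / x - 1 := Real.log_le_sub_one_of_pos (by positivity)
    have hpow : u ^ (a - 1) ≤ x ^ (a - 1) * Real.exp ((a - 1) * (u / x - 1)) := by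
      have heq : u ^ (a - 1) = x ^ (a - 1) * (u / x) ^ (a - 1) := by
        rw [← Real.mul_rpow (le_of_lt hx0) (by positivity)]
        rw [mul_div_cancel₀ _ (ne_of_gt hx0)]
      rw [heq]
      refine mul_le_mul_of_nonneg_left ?_ (Real.rpow_nonneg hx0.le _)
      rw [Real.rpow_def_of_pos (by positivity : (0:ℝ) < u / x)]
      exact Real.exp_le_exp.mpr (by nlinarith [hlog, ha1])
    have he : (a - 1) * (u / x - 1) + -u = -x + -c * (u - x) := by
      simp only [hc_def]
      field_simp
      ring
    calc u ^ (a - 1) * Real.exp (-u)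
        ≤ x ^ (a - 1) * Real.exp ((a - 1) * (u / x - 1)) * Real.exp (-u) :=
          mul_le_mul_of_nonneg_right hpow (Real.exp_nonneg _)
      _ = x ^ (a - 1) * Real.exp (-x) * Real.exp (-c * (u - x)) := by
          rw [mul_assoc, ← Real.exp_add, he, Real.exp_add, ← mul_assoc]
  -- dominating function
  have hg_int : IntegrableOn (fun u => Real.exp (-c * (u - x))) (Ioi x) := by
    have h1 : IntegrableOn (fun u => Real.exp (-c * u)) (Ioi x) :=
      exp_neg_integrableOn_Ioi x hc
    have h2 := h1.const_mul (Real.exp (c * x))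
    refine MeasureTheory.IntegrableOn.congr_fun h2 (fun u _ => ?_) measurableSet_Ioi
    rw [← Real.exp_add]; congr 1; ring
  have hg_val : (∫ u in Ioi x, Real.exp (-c * (u - x))) = 1 / c := by
    have hderiv : ∀ u ∈ Ici x, HasDerivAt (fun u => -(1/c) * Real.exp (-c * (u - x)))
        (Real.exp (-c * (u - x))) u := by
      intro u _
      have h1 : HasDerivAt (fun u : ℝ => -c * (u - x)) (-c) u := by
        simpa using ((hasDerivAt_id u).sub_const x).const_mul (-c)
      have h2 := (h1.exp).const_mul (-(1/c))
      refine h2.congr_deriv ?_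
      have hc' : c ≠ 0 := hc.ne'
      field_simp
    have htend : Tendsto (fun u => -(1/c) * Real.exp (-c * (u - x))) atTop (nhds 0) := by
      have h1 : Tendsto (fun u : ℝ => u - x) atTop atTop := by
        simpa [sub_eq_add_neg] using tendsto_atTop_add_const_right atTop (-x) tendsto_id
      have h2 : Tendsto (fun u : ℝ => -c * (u - x)) atTop atBot :=
        (tendsto_const_mul_atBot_of_neg (by linarith : -c < 0)).2 h1
      have h3 : Tendsto (fun u : ℝ => Real.exp (-c * (u - x))) atTop (nhds 0) :=
        Real.tendsto_exp_atBot.comp h2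
      simpa using h3.const_mul (-(1/c))
    rw [integral_Ioi_of_hasDerivAt_of_tendsto' hderiv hg_int htend]
    simp
  calc (∫ u in Set.Ioi x, u ^ (a - 1) * Real.exp (-u))
      ≤ ∫ u in Ioi x, x ^ (a - 1) * Real.exp (-x) * Real.exp (-c * (u - x)) := by
        apply setIntegral_mono_on _ (hg_int.const_mul _) measurableSet_Ioi hpt
        apply Integrable.mono (hg_int.const_mul (x ^ (a - 1) * Real.exp (-x)))
        · apply Measurable.aestronglyMeasurable
          fun_prop
        · filter_upwards [ae_restrict_mem measurableSet_Ioi] with u hu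
          rw [Real.norm_eq_abs, Real.norm_eq_abs, abs_of_nonneg, abs_of_nonneg]
          · exact hpt u hu
          · positivity
          · have : 0 < u := lt_trans hx0 hu
            positivity
    _ = x ^ (a - 1) * Real.exp (-x) * (1 / c) := by
        rw [integral_const_mul, hg_val]
    _ ≤ B * x ^ (a - 1) * Real.exp (-x) := by
        have h := mul_le_mul_of_nonneg_left hcB.le
          (show (0:ℝ) ≤ x ^ (a - 1) * Real.exp (-x) by positivity)
        calc x ^ (a - 1) * Real.exp (-x) * (1 / c)
            ≤ x ^ (a - 1) * Real.exp (-x) * B := h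
          _ = B * x ^ (a - 1) * Real.exp (-x) := by ring
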